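/- arXiv:2006.02544 — 6 statements merged into one kernel-verified Lean document; each statement's English description precedes it below -/
import Mathlib

section
/- Let Z_1, ..., Z_{n+1} be exchangeable real-valued random variables. Then with probability at least 1-α, Z_{n+1} is at most the ⌈(1-α)(n+1)⌉-th smallest value among Z_1, ..., Z_n (where if ⌈(1-α)(n+1)⌉ > n the bound holds trivially). -/
open MeasureTheory Finset
open scoped ENNReal

noncomputable section

lemma rank_le_iff {n : ℕ} (z : Fin n → ℝ) (m : ℕ) (hm : m < n) (x : ℝ) :
    x ≤ z (Tuple.sort z ⟨m, hm⟩) ↔ (univ.filter (fun i => z i < x)).card ≤ m := by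
  set σ := Tuple.sort z with hσ
  have hmono : Monotone (z ∘ σ) := Tuple.monotone_sort z
  constructor
  · intro hx
    have himg : univ.filter (fun i => z i < x)
        = Finset.image σ (univ.filter (fun r => z (σ r) < x)) := by
      ext i
      simp only [mem_filter, mem_univ, true_and, Finset.mem_image]
      constructor
      · intro h; exact ⟨σ.symm i, by simpa using h, by simp⟩
      · rintro ⟨r, hr, rfl⟩; exact hr
    rw [himg, Finset.card_image_of_injective _ σ.injective]
    have hsub : univ.filter (fun r => z (σ r) < x) ⊆ Finset.Iio ⟨m, hm⟩ := by
      intro r hr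
      simp only [mem_filter, mem_univ, true_and] at hr
      rw [Finset.mem_Iio]
      by_contra hle
      push_neg at hle
      exact absurd (lt_of_lt_of_le hr hx) (not_lt.2 (hmono hle))
    calc _ ≤ (Finset.Iio (⟨m, hm⟩ : Fin n)).card := Finset.card_le_card hsub
      _ = m := by rw [Fin.card_Iio]
  · intro hc
    by_contra hx
    push_neg at hx
    have hsub : Finset.image σ (Finset.Iic ⟨m, hm⟩) ⊆ univ.filter (fun i => z i < x) := by
      intro i hi
      simp only [Finset.mem_image, Finset.mem_Iic] at hi
      obtain ⟨r, hr, rfl⟩ := hi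
      simp only [mem_filter, mem_univ, true_and]
      exact lt_of_le_of_lt (hmono hr) hx
    have h2 := Finset.card_le_card hsub
    rw [Finset.card_image_of_injective _ σ.injective, Fin.card_Iic] at h2
    simp only [Fin.val_mk] at h2
    omega

lemma rank_count_lower {n k : ℕ} (z : Fin (n + 1) → ℝ) (hk : k ≤ n + 1) :
    k ≤ (univ.filter
      (fun j => (univ.filter (fun i => z i < z j)).card < k)).card := by
  classical
  set σ := Tuple.sort z with hσ
  have hsub : Finset.image σ (univ.filter (fun r : Fin (n+1) => (r : ℕ) < k))
      ⊆ univ.filter (fun j => (univ.filter (fun i => z i < z j)).card < k) := by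
    intro j hj
    simp only [Finset.mem_image, mem_filter, mem_univ, true_and] at hj ⊢
    obtain ⟨r, hr, rfl⟩ := hj
    have hrn : (r : ℕ) < n + 1 := r.isLt
    have := (rank_le_iff z (r : ℕ) hrn (z (σ r))).1 (by simp [hσ])
    omega
  have hcard : (univ.filter (fun r : Fin (n+1) => (r : ℕ) < k)).card = k := by
    have : (univ.filter (fun r : Fin (n+1) => (r : ℕ) < k))
        = Finset.map (Fin.castLEEmb hk) univ := by
      ext j
      simp only [mem_filter, mem_univ, true_and, Finset.mem_map]
      constructor
      · intro h; exact ⟨⟨j, h⟩, rfl⟩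
      · rintro ⟨r, -, rfl⟩; exact r.isLt
    rw [this, Finset.card_map, Finset.card_univ, Fintype.card_fin]
  calc k = _ := hcard.symm
    _ = (Finset.image σ (univ.filter (fun r : Fin (n+1) => (r : ℕ) < k))).card :=
      (Finset.card_image_of_injective _ σ.injective).symm
    _ ≤ _ := Finset.card_le_card hsub


/-- The `k`-th smallest value (1-indexed) among `Z 0, ..., Z (n-1)`,
or `+∞` if the index `k` exceeds `n`. -/
def kthSmallest {n : ℕ} (Z : Fin n → ℝ) (k : ℕ) : EReal :=
  if h : k - 1 < n then ((Z (Tuple.sort Z ⟨k - 1, h⟩) : ℝ) : EReal) else ⊤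

/-- If `Z 0, ..., Z n` are exchangeable real random variables and
`Q̂` is the `⌈(1-α)(n+1)⌉`-th smallest value among `Z 0, ..., Z (n-1)`
(or `+∞` if the index exceeds `n`), then `P[Z n ≤ Q̂] ≥ 1 - α`. -/
theorem split_conformal_lower_bound
    {Ω : Type*} [MeasurableSpace Ω] (ℙ : Measure Ω) [IsProbabilityMeasure ℙ]
    (n : ℕ) (Z : Fin (n + 1) → Ω → ℝ) (hZmeas : ∀ i, Measurable (Z i))
    (hexch : ∀ σ : Equiv.Perm (Fin (n + 1)),
      Measure.map (fun ω => fun i => Z (σ i) ω) ℙ = Measure.map (fun ω => fun i => Z i ω) ℙ)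
    (α : ℝ) (hα : α ∈ Set.Ioo (0 : ℝ) 1) :
    ENNReal.ofReal (1 - α) ≤
      ℙ {ω | (Z (Fin.last n) ω : EReal) ≤
        kthSmallest (fun i : Fin n => Z i.castSucc ω) ⌈(1 - α) * (n + 1)⌉₊} := by
  classical
  obtain ⟨hα0, hα1⟩ := hα
  set k := ⌈(1 - α) * (n + 1)⌉₊ with hkdef
  have hpos : (0:ℝ) < (1 - α) * (n + 1) := by
    apply mul_pos (by linarith)
    positivity
  have hk1 : 1 ≤ k := Nat.ceil_pos.2 hpos
  have hkn1 : k ≤ n + 1 := by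
    rw [hkdef]
    apply Nat.ceil_le.2
    have : (1 - α) * (n + 1) ≤ 1 * (n + 1) := by nlinarith
    simpa using this.trans (by simp)
  by_cases hcase : k - 1 < n
  · -- main case
    set vecZ : Ω → (Fin (n+1) → ℝ) := fun ω i => Z i ω with hvec
    have hvecMeas : Measurable vecZ := measurable_pi_lambda _ hZmeas
    set S : Fin (n+1) → Set (Fin (n+1) → ℝ) :=
      fun j => {v | (univ.filter (fun i => v i < v j)).card < k} with hS
    have hSmeas : ∀ j, MeasurableSet (S j) := by
      intro j
      have hcard : Measurable
          (fun v : Fin (n+1) → ℝ => (univ.filter (fun i => v i < v j)).card) := by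
        simp only [Finset.card_filter]
        apply Finset.measurable_sum
        intro i _
        exact Measurable.ite
          (measurableSet_lt (measurable_pi_apply i) (measurable_pi_apply j))
          measurable_const measurable_const
      exact hcard measurableSet_Iio
    have hAeq : ∀ j, ℙ (vecZ ⁻¹' S j) = ℙ (vecZ ⁻¹' S (Fin.last n)) := by
      intro j
      set e := Equiv.swap j (Fin.last n) with he
      have hmeasE : Measurable (fun ω => fun i => Z (e i) ω) :=
        measurable_pi_lambda _ (fun i => hZmeas (e i))
      have hSe : vecZ ⁻¹' S j = (fun ω => fun i => Z (e i) ω) ⁻¹' S (Fin.last n) := by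
        ext ω
        simp only [Set.mem_preimage, hS, Set.mem_setOf_eq, hvec]
        have hme : e (Fin.last n) = j := Equiv.swap_apply_right _ _
        have hcards : (univ.filter (fun i => Z (e i) ω < Z (e (Fin.last n)) ω)).card
            = (univ.filter (fun i => Z i ω < Z j ω)).card := by
          rw [hme]
          simp only [Finset.card_filter]
          exact Equiv.sum_comp e (fun i => if Z i ω < Z j ω then 1 else 0)
        rw [hcards]
      calc ℙ (vecZ ⁻¹' S j)
          = ℙ ((fun ω => fun i => Z (e i) ω) ⁻¹' S (Fin.last n)) := by rw [hSe]
        _ = (Measure.map (fun ω => fun i => Z (e i) ω) ℙ) (S (Fin.last n)) :=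
            (Measure.map_apply hmeasE (hSmeas _)).symm
        _ = (Measure.map (fun ω => fun i => Z i ω) ℙ) (S (Fin.last n)) := by rw [hexch e]
        _ = ℙ (vecZ ⁻¹' S (Fin.last n)) := Measure.map_apply hvecMeas (hSmeas _)
    have hsum : (k : ℝ≥0∞) ≤ ∑ j : Fin (n+1), ℙ (vecZ ⁻¹' S j) := by
      have hind : ∀ j, ℙ (vecZ ⁻¹' S j)
          = ∫⁻ ω, (vecZ ⁻¹' S j).indicator 1 ω ∂ℙ :=
        fun j => (lintegral_indicator_one (hvecMeas (hSmeas j))).symm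
      calc (k:ℝ≥0∞) = ∫⁻ (_ : Ω), (k:ℝ≥0∞) ∂ℙ := by simp
        _ ≤ ∫⁻ ω, ∑ j : Fin (n+1), (vecZ ⁻¹' S j).indicator 1 ω ∂ℙ := by
            apply lintegral_mono
            intro ω
            have hcount := rank_count_lower (vecZ ω) hkn1
            have hrw : ∑ j : Fin (n+1), (vecZ ⁻¹' S j).indicator 1 ω
                = ((univ.filter (fun j => (univ.filter
                    (fun i => vecZ ω i < vecZ ω j)).card < k)).card : ℝ≥0∞) := by
              rw [Finset.card_filter, Nat.cast_sum]
              apply Finset.sum_congr rfl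
              intro j _
              by_cases hj : ω ∈ vecZ ⁻¹' S j
              · have hj' : (univ.filter (fun i => vecZ ω i < vecZ ω j)).card < k := hj
                simp [Set.indicator_of_mem hj, hj']
              · have hj' : ¬ (univ.filter (fun i => vecZ ω i < vecZ ω j)).card < k := hj
                simp [Set.indicator_of_notMem hj, hj']
            show (k:ℝ≥0∞) ≤ ∑ j : Fin (n+1), (vecZ ⁻¹' S j).indicator 1 ω
            rw [hrw]
            exact Nat.cast_le.2 hcount
        _ = ∑ j : Fin (n+1), ℙ (vecZ ⁻¹' S j) := by
            rw [lintegral_finset_sum]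
            · exact Finset.sum_congr rfl (fun j _ => (hind j).symm)
            · intro j _
              exact Measurable.indicator measurable_const (hvecMeas (hSmeas j))
    have hsumconst : ∑ j : Fin (n+1), ℙ (vecZ ⁻¹' S j)
        = (n+1 : ℝ≥0∞) * ℙ (vecZ ⁻¹' S (Fin.last n)) := by
      rw [Finset.sum_congr rfl (fun j _ => hAeq j), Finset.sum_const, Finset.card_univ,
        Fintype.card_fin, nsmul_eq_mul]
      norm_cast
    have hmul : (n+1 : ℝ≥0∞) * ENNReal.ofReal (1 - α)
        ≤ (n+1 : ℝ≥0∞) * ℙ (vecZ ⁻¹' S (Fin.last n)) := by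
      have h1 : (n+1 : ℝ≥0∞) * ENNReal.ofReal (1 - α) ≤ (k : ℝ≥0∞) := by
        have : ((1 - α) * (n + 1) : ℝ) ≤ (k : ℝ) := Nat.le_ceil _
        calc (n+1 : ℝ≥0∞) * ENNReal.ofReal (1 - α)
            = ENNReal.ofReal ((1 - α) * (n + 1)) := by
              rw [ENNReal.ofReal_mul (by linarith), mul_comm]
              congr 1
              rw [ENNReal.ofReal_add (by positivity) zero_le_one,
                ENNReal.ofReal_natCast, ENNReal.ofReal_one]
          _ ≤ ENNReal.ofReal (k : ℝ) := ENNReal.ofReal_le_ofReal this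
          _ = (k : ℝ≥0∞) := ENNReal.ofReal_natCast k
      exact h1.trans (hsumconst ▸ hsum)
    have hfinal : ENNReal.ofReal (1 - α) ≤ ℙ (vecZ ⁻¹' S (Fin.last n)) := by
      have hne : (n+1 : ℝ≥0∞) ≠ 0 := by
        simp [add_eq_zero]
      have hnetop : (n+1 : ℝ≥0∞) ≠ ⊤ := by
        simp [ENNReal.add_ne_top]
      exact (ENNReal.mul_le_mul_iff_right hne hnetop).1 hmul
    have hseteq : {ω | (Z (Fin.last n) ω : EReal) ≤
        kthSmallest (fun i : Fin n => Z i.castSucc ω) k} = vecZ ⁻¹' S (Fin.last n) := by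
      ext ω
      simp only [Set.mem_setOf_eq, Set.mem_preimage, hS, Set.mem_setOf_eq,
        kthSmallest, dif_pos hcase]
      rw [EReal.coe_le_coe_iff]
      have hiff := rank_le_iff (fun i : Fin n => Z i.castSucc ω) (k-1) hcase
        (Z (Fin.last n) ω)
      have hcc : (univ.filter (fun i : Fin (n+1) => vecZ ω i < vecZ ω (Fin.last n))).card
          = (univ.filter (fun i : Fin n => Z i.castSucc ω < Z (Fin.last n) ω)).card := by
        rw [Finset.card_filter, Finset.card_filter, Fin.sum_univ_castSucc]
        simp [hvec]
      rw [hcc]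
      constructor
      · intro h; have := hiff.1 h; omega
      · intro h; exact hiff.2 (by omega)
    rw [hseteq]
    exact hfinal
  · -- k - 1 ≥ n : quantile is ⊤
    have hset : {ω | (Z (Fin.last n) ω : EReal) ≤
        kthSmallest (fun i : Fin n => Z i.castSucc ω) k} = Set.univ := by
      ext ω
      simp [kthSmallest, dif_neg hcase]
    rw [hset, measure_univ]
    exact ENNReal.ofReal_le_one.2 (by linarith)
end
end

section
/- Let Z_1, ..., Z_{n+1} be exchangeable real-valued random variables that are almost surely distinct. Then P[Z_{n+1} ≤ Q̂_{1-α}] ≤ 1-α + 1/(n+1), where Q̂_{1-α} is the ⌈(1-α)(n+1)⌉-th smallest value among Z_1,...,Z_n. -/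
open MeasureTheory Finset
open scoped ENNReal

noncomputable section

private lemma card_filter_perm {m : ℕ} (σ : Equiv.Perm (Fin m)) (p : Fin m → Prop)
    [DecidablePred p] :
    (univ.filter fun i => p (σ i)).card = (univ.filter p).card := by
  have h : (univ.filter (p ∘ σ.toEmbedding)).map σ.toEmbedding = univ.filter p := by
    rw [← Finset.filter_map, Finset.map_univ_equiv]
  have h2 : (univ.filter fun i => p (σ i)) = univ.filter (p ∘ σ.toEmbedding) :=
    Finset.filter_congr fun i _ => Iff.rfl
  rw [h2, ← h, Finset.card_map]

/-- If `Z 0, ..., Z n` are exchangeable and almost surely distinct, and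
`Q̂` is the `⌈(1-α)(n+1)⌉`-th smallest value among `Z 0, ..., Z (n-1)`
(or `+∞` if the index exceeds `n`), then `P[Z n ≤ Q̂] ≤ 1 - α + 1/(n+1)`. -/
theorem split_conformal_upper_bound
    {Ω : Type*} [MeasurableSpace Ω] (ℙ : Measure Ω) [IsProbabilityMeasure ℙ]
    (n : ℕ) (Z : Fin (n + 1) → Ω → ℝ) (hZmeas : ∀ i, Measurable (Z i))
    (hexch : ∀ σ : Equiv.Perm (Fin (n + 1)),
      Measure.map (fun ω => fun i => Z (σ i) ω) ℙ = Measure.map (fun ω => fun i => Z i ω) ℙ)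
    (hdistinct : ∀ i j : Fin (n + 1), i ≠ j → ℙ {ω | Z i ω = Z j ω} = 0)
    (α : ℝ) (hα : α ∈ Set.Ioo (0 : ℝ) 1) :
    ℙ {ω | (Z (Fin.last n) ω : EReal) ≤
        kthSmallest (fun i : Fin n => Z i.castSucc ω) ⌈(1 - α) * (n + 1)⌉₊} ≤
      ENNReal.ofReal (1 - α + 1 / (n + 1)) := by
  classical
  obtain ⟨hα0, hα1⟩ := hα
  set k : ℕ := ⌈(1 - α) * (n + 1)⌉₊ with hkdef
  have hx0 : (0 : ℝ) < (1 - α) * (n + 1) := by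
    have : (0:ℝ) < 1 - α := by linarith
    positivity
  have hk1 : 1 ≤ k := Nat.one_le_ceil_iff.mpr hx0
  by_cases hkn : k - 1 < n
  · -- main case : 1 ≤ k ≤ n
    -- the null set where some coordinates coincide
    set N : Set Ω := ⋃ (i : Fin (n+1)) (j : Fin (n+1)) (_ : i ≠ j), {ω | Z i ω = Z j ω} with hNdef
    have hNmeas : MeasurableSet N := by
      refine MeasurableSet.iUnion fun i => MeasurableSet.iUnion fun j =>
        MeasurableSet.iUnion fun _ => ?_
      exact measurableSet_eq_fun (hZmeas i) (hZmeas j)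
    have hN0 : ℙ N = 0 :=
      measure_iUnion_null fun i => measure_iUnion_null fun j =>
        measure_iUnion_null fun h => hdistinct i j h
    have hdist : ∀ ω, ω ∉ N → ∀ i j : Fin (n+1), i ≠ j → Z i ω ≠ Z j ω := by
      intro ω hω i j hij heq
      exact hω (Set.mem_iUnion.mpr ⟨i, Set.mem_iUnion.mpr ⟨j, Set.mem_iUnion.mpr ⟨hij, heq⟩⟩⟩)
    -- the rank function
    set rk : Fin (n+1) → Ω → ℕ := fun j ω => (univ.filter fun i => Z i ω ≤ Z j ω).card
      with hrkdef
    set A : Fin (n+1) → Set Ω := fun j => {ω | rk j ω ≤ k} with hAdef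
    -- measurable versions in sequence space
    have hcardmeas : ∀ j : Fin (n+1),
        Measurable fun f : Fin (n+1) → ℝ => (univ.filter fun i => f i ≤ f j).card := by
      intro j
      simp_rw [Finset.card_filter]
      refine Finset.measurable_sum _ fun i _ => Measurable.ite ?_ measurable_const
        measurable_const
      exact measurableSet_le (measurable_pi_apply i) (measurable_pi_apply j)
    have hSmeas : ∀ j : Fin (n+1),
        MeasurableSet {f : Fin (n+1) → ℝ | (univ.filter fun i => f i ≤ f j).card ≤ k} :=
      fun j => (hcardmeas j) (measurableSet_le measurable_id measurable_const)
    have hZvec : Measurable fun ω => fun i : Fin (n+1) => Z i ω :=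
      measurable_pi_lambda _ fun i => hZmeas i
    have hAmeas : ∀ j, MeasurableSet (A j) := by
      intro j
      have : A j = (fun ω => fun i : Fin (n+1) => Z i ω) ⁻¹'
          {f : Fin (n+1) → ℝ | (univ.filter fun i => f i ≤ f j).card ≤ k} := rfl
      rw [this]
      exact hZvec (hSmeas j)
    -- all ranks have the same distribution of the event {rk ≤ k}
    have hAeq : ∀ j, ℙ (A j) = ℙ (A (Fin.last n)) := by
      intro j
      let σ : Equiv.Perm (Fin (n+1)) := Equiv.swap j (Fin.last n)
      set S : Set (Fin (n+1) → ℝ) :=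
        {f | (univ.filter fun i => f i ≤ f (Fin.last n)).card ≤ k} with hSdef
      have hσvec : Measurable fun ω => fun i : Fin (n+1) => Z (σ i) ω :=
        measurable_pi_lambda _ fun i => hZmeas (σ i)
      have hpre : A j = (fun ω => fun i : Fin (n+1) => Z (σ i) ω) ⁻¹' S := by
        ext ω
        simp only [hAdef, hSdef, Set.mem_preimage, Set.mem_setOf_eq]
        have hσlast : σ (Fin.last n) = j := Equiv.swap_apply_right _ _
        simp only [hσlast]
        rw [card_filter_perm σ (fun i => Z i ω ≤ Z j ω)]
      rw [hpre, ← Measure.map_apply hσvec (hSmeas (Fin.last n)), hexch σ,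
        Measure.map_apply hZvec (hSmeas (Fin.last n))]
      rfl
    -- the sum of the probabilities is at most k
    have hsum : ∑ j : Fin (n+1), ℙ (A j) ≤ (k : ℝ≥0∞) := by
      have hdiff : ∀ j, ℙ (A j) = ℙ (A j \ N) := fun j => (measure_diff_null hN0).symm
      have hBmeas : ∀ j, MeasurableSet (A j \ N) := fun j => (hAmeas j).diff hNmeas
      calc ∑ j : Fin (n+1), ℙ (A j) = ∑ j : Fin (n+1), ℙ (A j \ N) := by
            simp_rw [hdiff]
        _ = ∑ j : Fin (n+1), ∫⁻ ω, (A j \ N).indicator (fun _ => (1 : ℝ≥0∞)) ω ∂ℙ := by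
            refine Finset.sum_congr rfl fun j _ => ?_
            rw [lintegral_indicator (hBmeas j)]
            simp
        _ = ∫⁻ ω, ∑ j : Fin (n+1), (A j \ N).indicator (fun _ => (1 : ℝ≥0∞)) ω ∂ℙ := by
            rw [lintegral_finset_sum]
            exact fun j _ => (measurable_const.indicator (hBmeas j))
        _ ≤ ∫⁻ _, (k : ℝ≥0∞) ∂ℙ := by
            refine lintegral_mono fun ω => ?_
            by_cases hω : ω ∈ N
            · have h0 : ∀ j : Fin (n+1), (A j \ N).indicator (fun _ => (1 : ℝ≥0∞)) ω = 0 := by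
                intro j
                exact Set.indicator_of_notMem (fun hc => hc.2 hω) _
              simp [h0]
            · have hcount : (∑ j : Fin (n+1), (A j \ N).indicator (fun _ => (1 : ℝ≥0∞)) ω)
                  = ((univ.filter fun j : Fin (n+1) => rk j ω ≤ k).card : ℝ≥0∞) := by
                rw [Finset.card_filter]
                push_cast
                refine Finset.sum_congr rfl fun j _ => ?_
                by_cases h : rk j ω ≤ k
                · simp [Set.indicator, Set.mem_diff, hAdef, h, hω]
                · simp [Set.indicator, Set.mem_diff, hAdef, h]
              rw [hcount]
              -- ranks are injective off N, and at least 1, so at most k of them are ≤ k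
              have hrk1 : ∀ j : Fin (n+1), 1 ≤ rk j ω := by
                intro j
                refine Finset.card_pos.mpr ⟨j, ?_⟩
                simp [hrkdef]
              have hinj : Set.InjOn (fun j => rk j ω)
                  ↑(univ.filter fun j : Fin (n+1) => rk j ω ≤ k) := by
                intro a ha b hb hab
                by_contra hne
                rcases lt_or_gt_of_ne (hdist ω hω a b hne) with hlt | hlt
                · have hsub : (univ.filter fun i => Z i ω ≤ Z a ω)
                      ⊆ (univ.filter fun i => Z i ω ≤ Z b ω) := by
                    intro i hi
                    simp only [Finset.mem_filter, Finset.mem_univ, true_and] at hi ⊢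
                    exact hi.trans hlt.le
                  have heqs := Finset.eq_of_subset_of_card_le hsub (le_of_eq hab.symm)
                  have hbmem : b ∈ (univ.filter fun i => Z i ω ≤ Z b ω) := by simp
                  rw [← heqs] at hbmem
                  simp only [Finset.mem_filter, Finset.mem_univ, true_and] at hbmem
                  exact absurd (le_antisymm hbmem hlt.le) (hdist ω hω b a (Ne.symm hne))
                · have hsub : (univ.filter fun i => Z i ω ≤ Z b ω)
                      ⊆ (univ.filter fun i => Z i ω ≤ Z a ω) := by
                    intro i hi
                    simp only [Finset.mem_filter, Finset.mem_univ, true_and] at hi ⊢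
                    exact hi.trans hlt.le
                  have heqs := Finset.eq_of_subset_of_card_le hsub (le_of_eq hab)
                  have hamem : a ∈ (univ.filter fun i => Z i ω ≤ Z a ω) := by simp
                  rw [← heqs] at hamem
                  simp only [Finset.mem_filter, Finset.mem_univ, true_and] at hamem
                  exact absurd (le_antisymm hamem hlt.le) (hdist ω hω a b hne)
              have hmaps : ∀ j ∈ (univ.filter fun j : Fin (n+1) => rk j ω ≤ k),
                  rk j ω ∈ Finset.Icc 1 k := by
                intro j hj
                simp only [Finset.mem_filter] at hj
                exact Finset.mem_Icc.mpr ⟨hrk1 j, hj.2⟩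
              have hcard := Finset.card_le_card_of_injOn (fun j => rk j ω) hmaps hinj
              rw [Nat.card_Icc] at hcard
              exact Nat.cast_le.mpr (by convert hcard.trans (show k + 1 - 1 ≤ k by omega) using 2)
        _ = (k : ℝ≥0∞) := by simp
    -- hence ℙ (A last) ≤ k / (n+1)
    have hmul : ((n : ℝ≥0∞) + 1) * ℙ (A (Fin.last n)) ≤ (k : ℝ≥0∞) := by
      have : ∑ j : Fin (n+1), ℙ (A j) = ((n : ℝ≥0∞) + 1) * ℙ (A (Fin.last n)) := by
        rw [Finset.sum_congr rfl fun j _ => hAeq j, Finset.sum_const, Finset.card_univ,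
          Fintype.card_fin, nsmul_eq_mul]
        push_cast
        ring
      rw [← this]; exact hsum
    have hPA : ℙ (A (Fin.last n)) ≤ (k : ℝ≥0∞) / ((n : ℝ≥0∞) + 1) := by
      rw [ENNReal.le_div_iff_mul_le (Or.inl (by simp)) (Or.inl (by simp))]
      rwa [mul_comm]
    -- the event is contained in A last up to N
    have hsubset : {ω | (Z (Fin.last n) ω : EReal) ≤
        kthSmallest (fun i : Fin n => Z i.castSucc ω) k} ⊆ A (Fin.last n) ∪ N := by
      intro ω hω
      by_cases hωN : ω ∈ N
      · exact Or.inr hωN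
      refine Or.inl ?_
      simp only [Set.mem_setOf_eq] at hω
      set v : Fin n → ℝ := fun i => Z i.castSucc ω with hvdef
      rw [kthSmallest, dif_pos hkn] at hω
      set Q : ℝ := v (Tuple.sort v ⟨k - 1, hkn⟩) with hQdef
      have hle : Z (Fin.last n) ω ≤ Q := by exact_mod_cast hω
      -- count the small values among the first n
      have hsmall : (univ.filter fun i : Fin n => v i < Q).card ≤ k - 1 := by
        have h1 : (univ.filter fun i : Fin n => v i < Q).card
            = (univ.filter fun i : Fin n => v (Tuple.sort v i) < Q).card :=
          (card_filter_perm (Tuple.sort v) (fun i => v i < Q)).symm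
        have h2 : (univ.filter fun i : Fin n => v (Tuple.sort v i) < Q)
            ⊆ (univ.filter fun i : Fin n => (i : ℕ) < k - 1) := by
          intro i hi
          simp only [Finset.mem_filter, Finset.mem_univ, true_and] at hi ⊢
          by_contra hc
          push_neg at hc
          have : Q ≤ v (Tuple.sort v i) := by
            have hmono := Tuple.monotone_sort v
            have hle' : (⟨k - 1, hkn⟩ : Fin n) ≤ i := by
              simpa [Fin.le_def] using hc
            simpa [hQdef] using hmono hle'
          exact absurd hi (not_lt.mpr this)
        have h3 : (univ.filter fun i : Fin n => (i : ℕ) < k - 1).card ≤ k - 1 := by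
          calc (univ.filter fun i : Fin n => (i : ℕ) < k - 1).card
              ≤ (Finset.range (k - 1)).card :=
                Finset.card_le_card_of_injOn (fun i : Fin n => (i : ℕ))
                  (fun i hi => Finset.mem_range.mpr (Finset.mem_filter.mp hi).2)
                  (Fin.val_injective.injOn)
            _ = k - 1 := Finset.card_range _
        rw [h1]
        exact (Finset.card_le_card h2).trans h3
      -- now bound the rank of the last coordinate
      have hsub2 : (univ.filter fun i : Fin (n+1) => Z i ω ≤ Z (Fin.last n) ω)
          ⊆ insert (Fin.last n) ((univ.filter fun i : Fin n => v i < Q).image Fin.castSucc) := by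
        intro i hi
        simp only [Finset.mem_filter, Finset.mem_univ, true_and] at hi
        rcases eq_or_ne i (Fin.last n) with h | h
        · exact h ▸ Finset.mem_insert_self _ _
        · obtain ⟨i', rfl⟩ := Fin.exists_castSucc_eq.mpr h
          refine Finset.mem_insert_of_mem ?_
          refine Finset.mem_image.mpr ⟨i', ?_, rfl⟩
          simp only [Finset.mem_filter, Finset.mem_univ, true_and]
          have hne : v i' ≠ Z (Fin.last n) ω :=
            hdist ω hωN i'.castSucc (Fin.last n) (Fin.castSucc_lt_last i').ne
          exact lt_of_lt_of_le (lt_of_le_of_ne hi hne) hle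
      have : rk (Fin.last n) ω ≤ k := by
        calc rk (Fin.last n) ω
            ≤ (insert (Fin.last n)
                ((univ.filter fun i : Fin n => v i < Q).image Fin.castSucc)).card :=
              Finset.card_le_card hsub2
          _ ≤ ((univ.filter fun i : Fin n => v i < Q).image Fin.castSucc).card + 1 :=
              Finset.card_insert_le _ _
          _ ≤ (univ.filter fun i : Fin n => v i < Q).card + 1 :=
              Nat.add_le_add_right (Finset.card_image_le) 1
          _ ≤ (k - 1) + 1 := Nat.add_le_add_right hsmall 1
          _ = k := by omega
      exact this
    calc ℙ {ω | (Z (Fin.last n) ω : EReal) ≤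
            kthSmallest (fun i : Fin n => Z i.castSucc ω) k}
        ≤ ℙ (A (Fin.last n) ∪ N) := measure_mono hsubset
      _ ≤ ℙ (A (Fin.last n)) + ℙ N := measure_union_le _ _
      _ = ℙ (A (Fin.last n)) := by rw [hN0, add_zero]
      _ ≤ (k : ℝ≥0∞) / ((n : ℝ≥0∞) + 1) := hPA
      _ ≤ ENNReal.ofReal (1 - α + 1 / (n + 1)) := by
          have hkR : (k : ℝ) < (1 - α) * (n + 1) + 1 := Nat.ceil_lt_add_one hx0.le
          have hdivle : (k : ℝ) / (n + 1) ≤ 1 - α + 1 / (n + 1) := by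
            rw [div_le_iff₀ (by positivity)]
            have hn1 : (0:ℝ) < (n:ℝ) + 1 := by positivity
            field_simp
            nlinarith
          have hrw : (k : ℝ≥0∞) / ((n : ℝ≥0∞) + 1) = ENNReal.ofReal ((k : ℝ) / (n + 1)) := by
            rw [ENNReal.ofReal_div_of_pos (by positivity)]
            congr 1
            · exact (ENNReal.ofReal_natCast k).symm
            · rw [ENNReal.ofReal_add (by positivity) zero_le_one]
              simp [ENNReal.ofReal_natCast]
          rw [hrw]
          exact ENNReal.ofReal_le_ofReal hdivle
  · -- degenerate case : k > n, the quantile is +∞ but the bound exceeds 1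
    have hkval : n + 1 ≤ k := by omega
    have hlt : (n : ℝ) < (1 - α) * (n + 1) := by
      have := Nat.add_one_le_ceil_iff.mp hkval
      exact_mod_cast this
    have h1le : (1 : ℝ) ≤ 1 - α + 1 / (n + 1) := by
      have hn1 : (0:ℝ) < (n:ℝ) + 1 := by positivity
      rw [← sub_nonneg]
      have heq : 1 - α + 1 / ((n:ℝ) + 1) - 1 = ((1 - α) * (n + 1) - n) / (n + 1) := by
        field_simp
        ring
      rw [heq]
      exact div_nonneg (by linarith) hn1.le
    calc ℙ {ω | (Z (Fin.last n) ω : EReal) ≤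
            kthSmallest (fun i : Fin n => Z i.castSucc ω) k}
        ≤ 1 := prob_le_one
      _ ≤ ENNReal.ofReal (1 - α + 1 / (n + 1)) := by
          rw [← ENNReal.ofReal_one]
          exact ENNReal.ofReal_le_ofReal h1le
end
end

section
/- If Z_1, ..., Z_{n+1} are exchangeable and almost surely distinct, then the rank of Z_{n+1} among Z_1,...,Z_{n+1} is uniformly distributed on {1,...,n+1}. -/
open MeasureTheory Finset
open scoped ENNReal

noncomputable section

lemma cnt_exists_unique {n : ℕ} (v : Fin (n+1) → ℝ)
    (hv : ∀ i j : Fin (n+1), i ≠ j → v i ≠ v j) {m : ℕ} (hm : m ≤ n) :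
    ∃! j : Fin (n+1), (Finset.univ.filter (fun i => v i < v j)).card = m := by
  classical
  have hle : ∀ j, (Finset.univ.filter (fun i => v i < v j)).card ≤ n := by
    intro j
    have hsub : Finset.univ.filter (fun i => v i < v j) ⊆ Finset.univ.erase j := by
      intro i hi
      simp only [mem_filter] at hi
      refine Finset.mem_erase.mpr ⟨?_, Finset.mem_univ i⟩
      rintro rfl; exact lt_irrefl _ hi.2
    calc _ ≤ (Finset.univ.erase j).card := Finset.card_le_card hsub
      _ = n := by simp [Finset.card_erase_of_mem]
  set f : Fin (n+1) → Fin (n+1) :=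
    fun j => ⟨(Finset.univ.filter (fun i => v i < v j)).card, Nat.lt_succ_of_le (hle j)⟩ with hf
  have key : ∀ a b : Fin (n+1), v a < v b →
      (Finset.univ.filter (fun i => v i < v a)).card
        < (Finset.univ.filter (fun i => v i < v b)).card := by
    intro a b h
    apply Finset.card_lt_card
    rw [Finset.ssubset_def]
    constructor
    · intro i hi
      simp only [mem_filter, Finset.mem_univ, true_and] at *
      exact lt_trans hi h
    · intro hsub
      have ha : a ∈ Finset.univ.filter (fun i => v i < v b) := by simp [h]
      have := hsub ha
      simp only [mem_filter, Finset.mem_univ, true_and] at this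
      exact lt_irrefl _ this
  have hinj : Function.Injective f := by
    intro a b hab
    by_contra hne
    have hvne := hv a b hne
    have hcard : (Finset.univ.filter (fun i => v i < v a)).card
        = (Finset.univ.filter (fun i => v i < v b)).card := congrArg Fin.val hab
    rcases lt_or_gt_of_ne hvne with h | h
    · exact absurd hcard (Nat.ne_of_lt (key a b h))
    · exact absurd hcard.symm (Nat.ne_of_lt (key b a h))
  have hsurj : Function.Surjective f := Finite.surjective_of_injective hinj
  obtain ⟨j, hj⟩ := hsurj ⟨m, Nat.lt_succ_of_le hm⟩
  refine ⟨j, congrArg Fin.val hj, ?_⟩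
  intro y hy
  apply hinj
  apply Fin.ext
  rw [hj]
  exact hy

/-- If `Z 0, ..., Z n` are exchangeable and almost surely distinct, then the rank of
`Z n` among `Z 0, ..., Z n`, defined as `1 + #{i < n : Z i < Z n}`, is uniformly
distributed on `{1, ..., n+1}`. -/
theorem rank_uniform
    {Ω : Type*} [MeasurableSpace Ω] (ℙ : Measure Ω) [IsProbabilityMeasure ℙ]
    (n : ℕ) (Z : Fin (n + 1) → Ω → ℝ) (hZmeas : ∀ i, Measurable (Z i))
    (hexch : ∀ σ : Equiv.Perm (Fin (n + 1)),
      Measure.map (fun ω => fun i => Z (σ i) ω) ℙ = Measure.map (fun ω => fun i => Z i ω) ℙ)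
    (hdistinct : ∀ i j : Fin (n + 1), i ≠ j → ℙ {ω | Z i ω = Z j ω} = 0)
    (k : ℕ) (hk : k ∈ Finset.Icc 1 (n + 1)) :
    ℙ {ω | 1 + (Finset.univ.filter
        (fun i : Fin n => Z i.castSucc ω < Z (Fin.last n) ω)).card = k}
      = 1 / (n + 1) := by
  classical
  obtain ⟨hk1, hk2⟩ := Finset.mem_Icc.mp hk
  set m := k - 1 with hm
  have hmn : m ≤ n := by omega
  set Zv : Ω → (Fin (n+1) → ℝ) := fun ω i => Z i ω with hZv
  have hZvmeas : Measurable Zv := measurable_pi_lambda _ (fun i => hZmeas i)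
  set S : Fin (n+1) → Set (Fin (n+1) → ℝ) :=
    fun j => {v | (Finset.univ.filter (fun i => v i < v j)).card = m} with hS
  have hSmeas : ∀ j, MeasurableSet (S j) := by
    intro j
    have hc : Measurable (fun v : Fin (n+1) → ℝ =>
        (Finset.univ.filter (fun i => v i < v j)).card) := by
      simp only [Finset.card_filter]
      exact Finset.measurable_sum _ (fun i _ =>
        Measurable.ite (measurableSet_lt (measurable_pi_apply i) (measurable_pi_apply j))
          measurable_const measurable_const)
    exact hc (measurableSet_singleton m)
  -- all events have equal measure under the pushforward, via exchangeability
  have hEq : ∀ j, (Measure.map Zv ℙ) (S j) = (Measure.map Zv ℙ) (S (Fin.last n)) := by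
    intro j
    set σ : Equiv.Perm (Fin (n+1)) := Equiv.swap j (Fin.last n) with hσ
    have hσmeas : Measurable (fun v : Fin (n+1) → ℝ => v ∘ σ) :=
      measurable_pi_lambda _ (fun i => measurable_pi_apply (σ i))
    have hpre : S j = (fun v : Fin (n+1) → ℝ => v ∘ σ) ⁻¹' (S (Fin.last n)) := by
      ext v
      simp only [hS, Set.mem_setOf_eq, Set.mem_preimage, Function.comp]
      have hlast : v (σ (Fin.last n)) = v j := by simp [hσ, Equiv.swap_apply_right]
      have hcard : (Finset.univ.filter (fun i => v (σ i) < v j)).card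
          = (Finset.univ.filter (fun i => v i < v j)).card := by
        apply Finset.card_bij (fun i _ => σ i)
        · intro a ha
          simp only [mem_filter, Finset.mem_univ, true_and] at *
          exact ha
        · intro a _ b _ hab
          exact σ.injective hab
        · intro b hb
          refine ⟨σ.symm b, ?_, by simp⟩
          simp only [mem_filter, Finset.mem_univ, true_and, Equiv.apply_symm_apply] at *
          exact hb
      simp only [hlast, hcard]
    have hmapσ : Measure.map (fun v : Fin (n+1) → ℝ => v ∘ σ) (Measure.map Zv ℙ)
        = Measure.map Zv ℙ := by
      rw [Measure.map_map hσmeas hZvmeas]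
      have : ((fun v : Fin (n+1) → ℝ => v ∘ σ) ∘ Zv) = fun ω => fun i => Z (σ i) ω := rfl
      rw [this, hexch σ]
    calc (Measure.map Zv ℙ) (S j)
        = (Measure.map Zv ℙ) ((fun v : Fin (n+1) → ℝ => v ∘ σ) ⁻¹' (S (Fin.last n))) := by
          rw [← hpre]
      _ = (Measure.map (fun v : Fin (n+1) → ℝ => v ∘ σ) (Measure.map Zv ℙ)) (S (Fin.last n)) :=
          (Measure.map_apply hσmeas (hSmeas _)).symm
      _ = (Measure.map Zv ℙ) (S (Fin.last n)) := by rw [hmapσ]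
  -- the events in Ω
  set A : Fin (n+1) → Set Ω := fun j => Zv ⁻¹' (S j) with hA
  have hAmeas : ∀ j, MeasurableSet (A j) := fun j => hZvmeas (hSmeas j)
  have hPA : ∀ j, ℙ (A j) = (Measure.map Zv ℙ) (S j) :=
    fun j => (Measure.map_apply hZvmeas (hSmeas j)).symm
  -- the a.s. distinctness set
  set D : Set Ω := {ω | ∀ i j : Fin (n+1), i ≠ j → Z i ω ≠ Z j ω} with hD
  have hDc : ℙ Dᶜ = 0 := by
    have hsub : Dᶜ ⊆ ⋃ i : Fin (n+1), ⋃ j : Fin (n+1), ⋃ (_ : i ≠ j),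
        {ω | Z i ω = Z j ω} := by
      intro ω hω
      simp only [hD, Set.mem_compl_iff, Set.mem_setOf_eq] at hω
      push_neg at hω
      obtain ⟨i, j, hij, h⟩ := hω
      exact Set.mem_iUnion.mpr ⟨i, Set.mem_iUnion.mpr ⟨j, Set.mem_iUnion.mpr ⟨hij, h⟩⟩⟩
    refine measure_mono_null hsub ?_
    exact measure_iUnion_null fun i => measure_iUnion_null fun j =>
      measure_iUnion_null fun hij => hdistinct i j hij
  have hDmeas : MeasurableSet D := by
    have : Dᶜ = ⋃ i : Fin (n+1), ⋃ j : Fin (n+1), ⋃ (_ : i ≠ j), {ω | Z i ω = Z j ω} := by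
      ext ω
      simp only [hD, Set.mem_compl_iff, Set.mem_setOf_eq, Set.mem_iUnion]
      push_neg
      constructor
      · intro h; obtain ⟨i, j, hij, hh⟩ := h; exact ⟨i, j, hij, hh⟩
      · intro h; obtain ⟨i, j, hij, hh⟩ := h; exact ⟨i, j, hij, hh⟩
    have hmc : MeasurableSet Dᶜ := by
      rw [this]
      exact MeasurableSet.iUnion fun i => MeasurableSet.iUnion fun j =>
        MeasurableSet.iUnion fun _ => measurableSet_eq_fun (hZmeas i) (hZmeas j)
    simpa using hmc.compl
  -- on D, the events A j partition D
  have hcover : D = ⋃ j, A j ∩ D := by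
    ext ω
    simp only [Set.mem_iUnion, Set.mem_inter_iff]
    constructor
    · intro hω
      obtain ⟨j, hj, -⟩ := cnt_exists_unique (Zv ω) hω hmn
      exact ⟨j, hj, hω⟩
    · rintro ⟨j, -, hω⟩; exact hω
  have hdisj : Pairwise (Function.onFun Disjoint (fun j => A j ∩ D)) := by
    intro a b hab
    rw [Function.onFun, Set.disjoint_left]
    rintro ω ⟨ha, hωD⟩ ⟨hb, -⟩
    obtain ⟨j, -, huniq⟩ := cnt_exists_unique (Zv ω) hωD hmn
    exact hab ((huniq a ha).trans (huniq b hb).symm)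
  have hsum : ∑ j : Fin (n+1), ℙ (A j ∩ D) = 1 := by
    have := measure_iUnion (μ := ℙ) hdisj (fun j => (hAmeas j).inter hDmeas)
    rw [← hcover] at this
    rw [tsum_fintype] at this
    rw [← this]
    have : ℙ D = 1 := by
      have := prob_compl_eq_zero_iff (μ := ℙ) hDmeas
      exact this.mp hDc
    rw [this]
  have hAD : ∀ j, ℙ (A j ∩ D) = ℙ (A j) := by
    intro j
    have h0 : ℙ (A j ∩ Dᶜ) = 0 := measure_mono_null Set.inter_subset_right hDc
    have hid := measure_inter_add_diff (μ := ℙ) (A j) hDmeas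
    rw [Set.diff_eq, h0, add_zero] at hid
    exact hid
  have hsum' : (n + 1 : ℝ≥0∞) * ℙ (A (Fin.last n)) = 1 := by
    have : ∑ j : Fin (n+1), ℙ (A j) = 1 := by
      rw [← hsum]; exact Finset.sum_congr rfl fun j _ => (hAD j).symm
    calc (n + 1 : ℝ≥0∞) * ℙ (A (Fin.last n))
        = ∑ _j : Fin (n+1), ℙ (A (Fin.last n)) := by
          rw [Finset.sum_const, Finset.card_univ, Fintype.card_fin, nsmul_eq_mul]
          push_cast; ring
      _ = ∑ j : Fin (n+1), ℙ (A j) := by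
          refine Finset.sum_congr rfl fun j _ => ?_
          rw [hPA, hPA, hEq j]
      _ = 1 := this
  -- identify the target set with A (last n)
  have hset : {ω | 1 + (Finset.univ.filter
      (fun i : Fin n => Z i.castSucc ω < Z (Fin.last n) ω)).card = k} = A (Fin.last n) := by
    ext ω
    simp only [hA, hS, Set.mem_setOf_eq, Set.mem_preimage, hZv]
    have hcard : (Finset.univ.filter (fun i : Fin (n+1) => Z i ω < Z (Fin.last n) ω)).card
        = (Finset.univ.filter (fun i : Fin n => Z i.castSucc ω < Z (Fin.last n) ω)).card := by
      rw [Finset.card_filter, Finset.card_filter, Fin.sum_univ_castSucc]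
      simp
    rw [hcard]
    omega
  rw [hset]
  have hne : (n + 1 : ℝ≥0∞) ≠ 0 := by simp
  have hnt : (n + 1 : ℝ≥0∞) ≠ ⊤ := by
    exact_mod_cast ENNReal.add_ne_top.mpr ⟨ENNReal.natCast_ne_top n, ENNReal.one_ne_top⟩
  rw [ENNReal.eq_div_iff hne hnt]
  exact hsum'
end
end

section
/- Let π be a probability vector on {1,...,C}, let τ ∈ (0,1], let U ~ Uniform(0,1), and define the randomized set S(U;π,τ) to be the top L(π,τ)−1 labels if U ≤ V(π,τ) and the top L(π,τ) labels otherwise, where V(π,τ) = (∑_{c=1}^{L(π,τ)} π_(c) − τ)/π_(L(π,τ)). If Y is drawn from π independently of U, then P[Y ∈ S(U;π,τ)] = τ. -/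
open MeasureTheory Finset

noncomputable section

/-- Number of labels with strictly larger probability than `y`. -/
def nAbove {C : ℕ} (π : Fin C → ℝ) (y : Fin C) : ℕ :=
  (Finset.univ.filter (fun y' => π y < π y')).card

/-- The set of labels attaining the `c` largest probabilities
(well-defined as a set of size `min c C` when the entries of `π` are distinct). -/
def topSet {C : ℕ} (π : Fin C → ℝ) (c : ℕ) : Finset (Fin C) :=
  Finset.univ.filter (fun y => nAbove π y < c)

/-- The `r`-th largest entry of `π` (0-indexed: `sortedDesc π 0 = π_(1)`),
and `0` if `r` is out of range. -/
def sortedDesc {C : ℕ} (π : Fin C → ℝ) (r : ℕ) : ℝ :=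
  if h : r < C then π ((Tuple.sort π) (Fin.rev ⟨r, h⟩)) else 0

/-- Sum of the `c` largest entries of `π`: `π_(1) + ... + π_(c)`. -/
def topSum {C : ℕ} (π : Fin C → ℝ) (c : ℕ) : ℝ :=
  ∑ r ∈ Finset.range c, sortedDesc π r

/-- Generalized conditional quantile `L(π, τ) = min {c ∈ {1,...,C} : π_(1) + ... + π_(c) ≥ τ}`. -/
def Lgen {C : ℕ} (π : Fin C → ℝ) (τ : ℝ) : ℕ :=
  sInf {c : ℕ | 1 ≤ c ∧ τ ≤ topSum π c}

/-- `V(π, τ) = (∑_{c=1}^{L(π,τ)} π_(c) − τ) / π_(L(π,τ))`. -/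
def Vgen {C : ℕ} (π : Fin C → ℝ) (τ : ℝ) : ℝ :=
  (topSum π (Lgen π τ) - τ) / sortedDesc π (Lgen π τ - 1)

/-- The randomized oracle prediction set `S(u; π, τ)`: the top `L(π,τ) − 1` labels
if `u ≤ V(π,τ)`, and the top `L(π,τ)` labels otherwise. -/
def Sgen {C : ℕ} (u : ℝ) (π : Fin C → ℝ) (τ : ℝ) : Finset (Fin C) :=
  if u ≤ Vgen π τ then topSet π (Lgen π τ - 1) else topSet π (Lgen π τ)

/-- The generalized inverse quantile conformity score
`E(y, u; π) = min {τ ∈ [0,1] : y ∈ S(u; π, τ)}`. -/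
def Egen {C : ℕ} (y : Fin C) (u : ℝ) (π : Fin C → ℝ) : ℝ :=
  sInf {τ : ℝ | τ ∈ Set.Icc (0 : ℝ) 1 ∧ y ∈ Sgen u π τ}

variable {C : ℕ} (π : Fin C → ℝ)

def eFn (π : Fin C → ℝ) : Fin C → Fin C := fun r => Tuple.sort π r.rev

lemma eFn_bij : Function.Bijective (eFn π) :=
  (Equiv.bijective (Tuple.sort π)).comp Fin.rev_injective.bijective_of_finite

lemma sortedDesc_coe (r : Fin C) : sortedDesc π (r : ℕ) = π (eFn π r) := by
  rw [sortedDesc, dif_pos r.isLt]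
  simp [eFn]

lemma nAbove_eFn (hinj : Function.Injective π) (r : Fin C) :
    nAbove π (eFn π r) = r := by
  have hsm : StrictMono (π ∘ Tuple.sort π) :=
    (Tuple.monotone_sort π).strictMono_of_injective (hinj.comp (Equiv.injective _))
  have himg : (Finset.univ.filter (fun y' => π (eFn π r) < π y')) =
      Finset.image (Tuple.sort π) (Finset.univ.filter (fun j => π (eFn π r) < π (Tuple.sort π j))) := by
    ext y
    simp only [Finset.mem_filter, Finset.mem_image, Finset.mem_univ, true_and]
    constructor
    · intro h; exact ⟨(Tuple.sort π).symm y, by simpa using h, by simp⟩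
    · rintro ⟨j, hj, rfl⟩; exact hj
  have hcond : ∀ j : Fin C, (π (eFn π r) < π (Tuple.sort π j)) ↔ r.rev < j := by
    intro j
    exact (hsm.lt_iff_lt (a := r.rev) (b := j))
  rw [nAbove, himg, Finset.card_image_of_injective _ (Equiv.injective _)]
  simp only [hcond]
  have : (Finset.univ.filter (fun j : Fin C => r.rev < j)) = Finset.Ioi r.rev := by
    ext j; simp
  rw [this, Fin.card_Ioi]
  simp [Fin.rev]
  omega

lemma sum_topSet (hinj : Function.Injective π) (c : ℕ) :
    ∑ y ∈ topSet π c, π y = topSum π c := by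
  have h1 : ∑ y ∈ topSet π c, π y = ∑ y : Fin C, if nAbove π y < c then π y else 0 := by
    rw [topSet, Finset.sum_filter]
  have h2 : ∑ y : Fin C, (if nAbove π y < c then π y else 0)
      = ∑ r : Fin C, (if (r : ℕ) < c then π (eFn π r) else 0) := by
    rw [← Fintype.sum_bijective (eFn π) (eFn_bij π) _ _ (fun r => rfl)]
    refine Finset.sum_congr rfl fun r _ => ?_
    rw [nAbove_eFn π hinj]
  have h3 : ∑ r : Fin C, (if (r : ℕ) < c then π (eFn π r) else 0)
      = ∑ r ∈ Finset.range C, (if r < c then sortedDesc π r else 0) := by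
    rw [← Fin.sum_univ_eq_sum_range (fun r => if r < c then sortedDesc π r else 0) C]
    refine Finset.sum_congr rfl fun r _ => ?_
    rw [sortedDesc_coe]
  have h4 : ∑ r ∈ Finset.range C, (if r < c then sortedDesc π r else 0) = topSum π c := by
    rw [← Finset.sum_filter, topSum]
    rcases le_total c C with h | h
    · have : (Finset.range C).filter (· < c) = Finset.range c := by
        ext r; simp; omega
      rw [this]
    · have h1 : (Finset.range C).filter (· < c) = Finset.range C := by
        ext r; simp; omega
      rw [h1, Finset.range_eq_Ico, Finset.range_eq_Ico,
        ← Finset.sum_Ico_consecutive _ (Nat.zero_le C) h]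
      have : ∑ r ∈ Finset.Ico C c, sortedDesc π r = 0 := by
        apply Finset.sum_eq_zero
        intro r hr
        rw [sortedDesc, dif_neg]
        simp at hr; omega
      rw [this, add_zero]
  rw [h1, h2, h3, h4]


lemma topSet_mono {c c' : ℕ} (h : c ≤ c') : topSet π c ⊆ topSet π c' := by
  intro y hy
  simp only [topSet, Finset.mem_filter] at *
  exact ⟨hy.1, lt_of_lt_of_le hy.2 h⟩

lemma nAbove_lt (y : Fin C) : nAbove π y < C := by
  have hss : (Finset.univ.filter (fun y' => π y < π y')) ⊂ Finset.univ :=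
    Finset.filter_ssubset.mpr ⟨y, Finset.mem_univ y, lt_irrefl (π y)⟩
  have h := Finset.card_lt_card hss
  simpa [nAbove] using h

lemma topSet_univ_of_le {c : ℕ} (h : C ≤ c) : topSet π c = Finset.univ := by
  ext y; simp [topSet]
  exact lt_of_lt_of_le (nAbove_lt π y) h

/-- If `Y ~ π` and `U ~ Uniform(0,1)` independently, the randomized oracle set
`S(U; π, τ)` contains `Y` with probability exactly `τ`. -/
theorem oracle_coverage {C : ℕ} (π : Fin C → ℝ)
    (hpos : ∀ y, 0 < π y) (hsum : ∑ y, π y = 1) (hinj : Function.Injective π)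
    (τ : ℝ) (hτ : τ ∈ Set.Ioc (0 : ℝ) 1)
    (μ : Measure (Fin C)) (hμ : ∀ y, μ {y} = ENNReal.ofReal (π y)) :
    (μ.prod (volume.restrict (Set.Icc (0 : ℝ) 1)))
        {p : Fin C × ℝ | p.1 ∈ Sgen p.2 π τ} = ENNReal.ofReal τ := by
  obtain ⟨hτ0, hτ1⟩ := hτ
  have hC : 0 < C := by
    rcases Nat.eq_zero_or_pos C with h | h
    · subst h; simp at hsum
    · exact h
  have htopC : topSum π C = 1 := by
    rw [← sum_topSet π hinj, topSet_univ_of_le π le_rfl, hsum]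
  -- facts about L
  set L := Lgen π τ with hLdef
  have hCmem : C ∈ {c : ℕ | 1 ≤ c ∧ τ ≤ topSum π c} := ⟨hC, by rw [htopC]; exact hτ1⟩
  have hLmem : L ∈ {c : ℕ | 1 ≤ c ∧ τ ≤ topSum π c} := Nat.sInf_mem ⟨C, hCmem⟩
  have hL1 : 1 ≤ L := hLmem.1
  have hLτ : τ ≤ topSum π L := hLmem.2
  have hLC : L ≤ C := Nat.sInf_le hCmem
  have hlt : topSum π (L - 1) < τ := by
    rcases Nat.lt_or_ge (L - 1) 1 with h | h
    · have : L - 1 = 0 := by omega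
      rw [this]
      simpa [topSum] using hτ0
    · by_contra hcon
      push_neg at hcon
      have hmem : L - 1 ∈ {c : ℕ | 1 ≤ c ∧ τ ≤ topSum π c} := ⟨h, hcon⟩
      have hle : Lgen π τ ≤ L - 1 := Nat.sInf_le hmem
      rw [← hLdef] at hle
      omega
  set p := sortedDesc π (L - 1) with hpdef
  have hLC' : L - 1 < C := by omega
  have hp : 0 < p := by
    rw [hpdef, sortedDesc, dif_pos hLC']
    exact hpos _
  have hsplit : topSum π L = topSum π (L - 1) + p := by
    conv_lhs => rw [show L = (L - 1) + 1 by omega]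
    rw [topSum, Finset.sum_range_succ, ← topSum]
  set V := Vgen π τ with hVdef
  have hVeq : V = (topSum π L - τ) / p := rfl
  have hV0 : 0 ≤ V := div_nonneg (by linarith) hp.le
  have hV1 : V < 1 := by
    rw [hVeq, div_lt_one hp]
    linarith
  set T1 := topSet π (L - 1) with hT1def
  set T2 := topSet π L with hT2def
  have hT12 : T1 ⊆ T2 := topSet_mono π (by omega)
  -- decompose the set
  set ν := volume.restrict (Set.Icc (0 : ℝ) 1) with hνdef
  have hSeq : {q : Fin C × ℝ | q.1 ∈ Sgen q.2 π τ} =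
      (Prod.snd ⁻¹' Set.Iic V ∩ Prod.fst ⁻¹' (T1 : Set (Fin C))) ∪
      ((Prod.snd ⁻¹' Set.Iic V)ᶜ ∩ Prod.fst ⁻¹' (T2 : Set (Fin C))) := by
    ext ⟨y, u⟩
    by_cases h : u ≤ V <;>
      simp [Sgen, ← hVdef, ← hLdef, h, ← hT1def, ← hT2def]
  have hS : MeasurableSet {q : Fin C × ℝ | q.1 ∈ Sgen q.2 π τ} := by
    rw [hSeq]
    exact ((measurable_snd measurableSet_Iic).inter (measurable_fst (Finset.measurableSet _))).union
      (((measurable_snd measurableSet_Iic).compl).inter (measurable_fst (Finset.measurableSet _)))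
  rw [Measure.prod_apply hS]
  -- compute slice measures
  have hνuniv : ν Set.univ = 1 := by
    rw [hνdef, Measure.restrict_apply MeasurableSet.univ]
    simp
  have hνIoi : ν (Set.Ioi V) = ENNReal.ofReal (1 - V) := by
    rw [hνdef, Measure.restrict_apply measurableSet_Ioi]
    have : Set.Ioi V ∩ Set.Icc (0:ℝ) 1 = Set.Ioc V 1 := by
      ext x
      simp only [Set.mem_inter_iff, Set.mem_Ioi, Set.mem_Icc, Set.mem_Ioc]
      constructor
      · rintro ⟨h1, _, h3⟩; exact ⟨h1, h3⟩
      · rintro ⟨h1, h2⟩; exact ⟨h1, le_trans hV0 h1.le, h2⟩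
    rw [this, Real.volume_Ioc]
  set g : Fin C → ℝ := fun y => if y ∈ T1 then 1 else if y ∈ T2 then 1 - V else 0 with hgdef
  have hg0 : ∀ y, 0 ≤ g y := by
    intro y
    rw [hgdef]
    dsimp only
    split_ifs <;> linarith
  have hslice : ∀ y : Fin C, ν (Prod.mk y ⁻¹' {q : Fin C × ℝ | q.1 ∈ Sgen q.2 π τ})
      = ENNReal.ofReal (g y) := by
    intro y
    rw [hSeq]
    by_cases h1 : y ∈ T1
    · have h2 : y ∈ T2 := hT12 h1
      have : Prod.mk y ⁻¹' ((Prod.snd ⁻¹' Set.Iic V ∩ Prod.fst ⁻¹' (T1 : Set (Fin C))) ∪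
          ((Prod.snd ⁻¹' Set.Iic V)ᶜ ∩ Prod.fst ⁻¹' (T2 : Set (Fin C)))) = Set.univ := by
        ext u; by_cases h : u ≤ V <;> simp [h, h1, h2]
      rw [this, hgdef]
      simp [h1, hνuniv]
    · by_cases h2 : y ∈ T2
      · have : Prod.mk y ⁻¹' ((Prod.snd ⁻¹' Set.Iic V ∩ Prod.fst ⁻¹' (T1 : Set (Fin C))) ∪
            ((Prod.snd ⁻¹' Set.Iic V)ᶜ ∩ Prod.fst ⁻¹' (T2 : Set (Fin C)))) = Set.Ioi V := by
          ext u
          rcases le_or_gt u V with h | h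
          · simp [h, h1, h2, not_lt.mpr h]
          · simp [not_le.mpr h, h, h1, h2]
        rw [this, hgdef]
        simp only [h1, h2, if_false, if_true]
        exact hνIoi
      · have : Prod.mk y ⁻¹' ((Prod.snd ⁻¹' Set.Iic V ∩ Prod.fst ⁻¹' (T1 : Set (Fin C))) ∪
            ((Prod.snd ⁻¹' Set.Iic V)ᶜ ∩ Prod.fst ⁻¹' (T2 : Set (Fin C)))) = ∅ := by
          ext u; simp [h1, h2]
        rw [this, hgdef]
        simp [h1, h2]
  calc ∫⁻ y, ν (Prod.mk y ⁻¹' {q : Fin C × ℝ | q.1 ∈ Sgen q.2 π τ}) ∂μ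
      = ∑ y : Fin C, ENNReal.ofReal (g y) * μ {y} := by
        rw [lintegral_fintype]
        exact Finset.sum_congr rfl fun y _ => by rw [hslice y]
    _ = ∑ y : Fin C, ENNReal.ofReal (g y * π y) := by
        refine Finset.sum_congr rfl fun y _ => ?_
        rw [hμ y, ← ENNReal.ofReal_mul (hg0 y)]
    _ = ENNReal.ofReal (∑ y : Fin C, g y * π y) := by
        rw [ENNReal.ofReal_sum_of_nonneg]
        intro y _
        exact mul_nonneg (hg0 y) (hpos y).le
    _ = ENNReal.ofReal τ := by
        congr 1
        have hsum1 : ∑ y ∈ T1, g y * π y = topSum π (L - 1) := by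
          rw [← sum_topSet π hinj, ← hT1def]
          refine Finset.sum_congr rfl fun y hy => ?_
          rw [hgdef]; simp [hy]
        have hsum2 : ∑ y ∈ T2 \ T1, g y * π y = (1 - V) * (topSum π L - topSum π (L - 1)) := by
          have hd : ∑ y ∈ T2 \ T1, π y = topSum π L - topSum π (L - 1) := by
            have := Finset.sum_sdiff (f := π) hT12
            rw [sum_topSet π hinj, sum_topSet π hinj] at this
            linarith
          rw [← hd, Finset.mul_sum]
          refine Finset.sum_congr rfl fun y hy => ?_
          rw [Finset.mem_sdiff] at hy
          rw [hgdef]; simp [hy.1, hy.2, mul_comm]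
        have hsum3 : ∑ y ∈ Finset.univ \ T2, g y * π y = 0 := by
          apply Finset.sum_eq_zero
          intro y hy
          rw [Finset.mem_sdiff] at hy
          have h1 : y ∉ T1 := fun h => hy.2 (hT12 h)
          rw [hgdef]; simp [h1, hy.2]
        have e1 : ∑ y : Fin C, g y * π y
            = ∑ y ∈ Finset.univ \ T2, g y * π y + ∑ y ∈ T2, g y * π y :=
          (Finset.sum_sdiff (Finset.subset_univ T2)).symm
        have e2 : ∑ y ∈ T2, g y * π y
            = ∑ y ∈ T2 \ T1, g y * π y + ∑ y ∈ T1, g y * π y :=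
          (Finset.sum_sdiff hT12).symm
        rw [e1, e2, hsum1, hsum2, hsum3, hVeq, hsplit]
        field_simp
        ring
end
end

section
/- Split-conformal coverage (Theorem 1, lower bound): if the scores E_1,...,E_m, E_{n+1} computed on the calibration set and the test point are exchangeable real random variables, then the prediction set that includes the test label whenever its score is at most the ⌈(1-α)(m+1)⌉-th smallest calibration score has coverage at least 1-α. -/
open MeasureTheory Finset
open scoped ENNReal

noncomputable section

lemma count_lt_sort_le {n : ℕ} (W : Fin n → ℝ) (q : Fin n) :
    ((univ : Finset (Fin n)).filter (fun i => W i < W (Tuple.sort W q))).card ≤ (q : ℕ) := by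
  classical
  have hsub : (univ.filter (fun i => W i < W (Tuple.sort W q))) ⊆
      (univ.filter (fun r : Fin n => r < q)).image (Tuple.sort W) := by
    intro i hi
    simp only [mem_filter, mem_univ, true_and] at hi
    refine mem_image.mpr ⟨(Tuple.sort W).symm i, ?_, by simp⟩
    simp only [mem_filter, mem_univ, true_and]
    by_contra hq
    push_neg at hq
    have h2 := Tuple.monotone_sort W hq
    simp only [Function.comp_apply, Equiv.apply_symm_apply] at h2
    exact absurd hi (not_lt.mpr h2)
  calc ((univ : Finset (Fin n)).filter (fun i => W i < W (Tuple.sort W q))).card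
      ≤ ((univ.filter (fun r : Fin n => r < q)).image (Tuple.sort W)).card := card_le_card hsub
    _ ≤ (univ.filter (fun r : Fin n => r < q)).card := card_image_le
    _ = (q : ℕ) := by
        rw [show univ.filter (fun r : Fin n => r < q) = Iio q from by ext r; simp, Fin.card_Iio]

lemma le_kthSmallest_iff {n : ℕ} (Z : Fin n → ℝ) (x : ℝ) (k : ℕ) (hk : 1 ≤ k) (h : k - 1 < n) :
    ((x : EReal) ≤ kthSmallest Z k) ↔
      ((univ : Finset (Fin n)).filter (fun i => Z i < x)).card < k := by
  classical
  rw [kthSmallest, dif_pos h, EReal.coe_le_coe_iff]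
  set p : Fin n := ⟨k - 1, h⟩ with hp
  constructor
  · intro hx
    have hsub : univ.filter (fun i => Z i < x) ⊆
        univ.filter (fun i => Z i < Z (Tuple.sort Z p)) := by
      intro i hi
      simp only [mem_filter, mem_univ, true_and] at *
      linarith
    have := (card_le_card hsub).trans (count_lt_sort_le Z p)
    simp only [hp] at this
    omega
  · intro hc
    by_contra hx
    push_neg at hx
    have hsub : (univ.filter (fun r : Fin n => r ≤ p)).image (Tuple.sort Z) ⊆
        univ.filter (fun i => Z i < x) := by
      intro i hi
      simp only [mem_image, mem_filter, mem_univ, true_and] at *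
      obtain ⟨r, hr, rfl⟩ := hi
      have h2 := Tuple.monotone_sort Z hr
      simp only [Function.comp_apply] at h2
      linarith
    have h1 : ((univ.filter (fun r : Fin n => r ≤ p)).image (Tuple.sort Z)).card = k := by
      rw [card_image_of_injective _ (Tuple.sort Z).injective,
        show univ.filter (fun r : Fin n => r ≤ p) = Iic p from by ext r; simp, Fin.card_Iic]
      show k - 1 + 1 = k
      omega
    have := card_le_card hsub
    omega

lemma card_filter_val_lt {n : ℕ} (k : ℕ) (hk : k ≤ n) :
    ((univ : Finset (Fin n)).filter (fun q : Fin n => (q : ℕ) < k)).card = k := by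
  classical
  have h1 : (univ : Finset (Fin n)).filter (fun q : Fin n => (q : ℕ) < k)
      = (univ : Finset (Fin k)).image (Fin.castLE hk) := by
    ext q
    simp only [mem_filter, mem_univ, true_and, mem_image]
    constructor
    · intro hq; exact ⟨⟨(q : ℕ), hq⟩, rfl⟩
    · rintro ⟨r, rfl⟩; exact r.isLt
  rw [h1, card_image_of_injective _ (Fin.castLE_injective hk), card_univ, Fintype.card_fin]

lemma count_good_ge {n : ℕ} (W : Fin n → ℝ) (k : ℕ) (hk : k ≤ n) :
    k ≤ ((univ : Finset (Fin n)).filter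
      (fun j => ((univ : Finset (Fin n)).filter (fun i => W i < W j)).card < k)).card := by
  classical
  have hsub : ((univ : Finset (Fin n)).filter (fun q : Fin n => (q : ℕ) < k)).image (Tuple.sort W) ⊆
      univ.filter (fun j => (univ.filter (fun i => W i < W j)).card < k) := by
    intro j hj
    simp only [mem_image, mem_filter, mem_univ, true_and] at *
    obtain ⟨q, hq, rfl⟩ := hj
    exact lt_of_le_of_lt (count_lt_sort_le W q) hq
  have h1 : (((univ : Finset (Fin n)).filter (fun q : Fin n => (q : ℕ) < k)).image (Tuple.sort W)).card = k := by
    rw [card_image_of_injective _ (Tuple.sort W).injective, card_filter_val_lt k hk]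
  calc k = _ := h1.symm
    _ ≤ _ := card_le_card hsub

lemma card_filter_comp_equiv {n : ℕ} (σ : Equiv.Perm (Fin n)) (p : Fin n → Prop) [DecidablePred p] :
    ((univ : Finset (Fin n)).filter (fun i => p (σ i))).card = (univ.filter p).card := by
  classical
  rw [← card_image_of_injective ((univ : Finset (Fin n)).filter (fun i => p (σ i))) σ.injective]
  congr 1
  ext j
  simp only [mem_image, mem_filter, mem_univ, true_and]
  constructor
  · rintro ⟨i, hi, rfl⟩; exact hi
  · intro hj; exact ⟨σ.symm j, by simpa using hj, by simp⟩

lemma card_filter_castSucc {m : ℕ} (W : Fin (m + 1) → ℝ) :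
    ((univ : Finset (Fin (m + 1))).filter (fun i => W i < W (Fin.last m))).card
      = ((univ : Finset (Fin m)).filter (fun i => W i.castSucc < W (Fin.last m))).card := by
  classical
  rw [Fin.univ_castSuccEmb, filter_cons, if_neg (lt_irrefl _), filter_map, card_map]
  rfl
/-- Split-conformal coverage (Theorem 1, lower bound, abstract form): if the
calibration scores `E 0, ..., E (m-1)` and the test score `E m` are exchangeable
real random variables, then the test score is at most the `⌈(1-α)(m+1)⌉`-th
smallest calibration score (`+∞` if the index exceeds `m`) with probability at
least `1 - α`. -/
theorem split_conformal_coverage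
    {Ω : Type*} [MeasurableSpace Ω] (ℙ : Measure Ω) [IsProbabilityMeasure ℙ]
    (m : ℕ) (E : Fin (m + 1) → Ω → ℝ) (hEmeas : ∀ i, Measurable (E i))
    (hexch : ∀ σ : Equiv.Perm (Fin (m + 1)),
      Measure.map (fun ω => fun i => E (σ i) ω) ℙ = Measure.map (fun ω => fun i => E i ω) ℙ)
    (α : ℝ) (hα : α ∈ Set.Ioo (0 : ℝ) 1) :
    ENNReal.ofReal (1 - α) ≤
      ℙ {ω | (E (Fin.last m) ω : EReal) ≤
        kthSmallest (fun i : Fin m => E i.castSucc ω) ⌈(1 - α) * (m + 1)⌉₊} := by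
  classical
  obtain ⟨hα0, hα1⟩ := hα
  set k : ℕ := ⌈(1 - α) * (m + 1)⌉₊ with hkdef
  have hk1 : 1 ≤ k := by
    have hm : (0 : ℝ) < (m : ℝ) + 1 := by positivity
    have : (0 : ℝ) < (1 - α) * (m + 1) := by nlinarith
    exact Nat.one_le_iff_ne_zero.mpr (Nat.ceil_pos.mpr this).ne'
  have hk2 : k ≤ m + 1 := by
    apply Nat.ceil_le.mpr
    push_cast
    nlinarith
  by_cases hcase : k - 1 < m
  · -- main case
    -- the rank event sets
    set A : Fin (m + 1) → Set Ω := fun j =>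
      {ω | ((univ : Finset (Fin (m + 1))).filter (fun i => E i ω < E j ω)).card < k} with hA
    have hmap : Measurable (fun ω => fun i => E i ω) := measurable_pi_lambda _ hEmeas
    -- measurable sets in sequence space
    set S : Fin (m + 1) → Set (Fin (m + 1) → ℝ) := fun j =>
      {v | ((univ : Finset (Fin (m + 1))).filter (fun i => v i < v j)).card < k} with hS
    have hSmeas : ∀ j, MeasurableSet (S j) := by
      intro j
      have hg : Measurable (fun v : Fin (m + 1) → ℝ =>
          ((univ : Finset (Fin (m + 1))).filter (fun i => v i < v j)).card) := by
        simp_rw [Finset.card_filter]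
        apply Finset.measurable_sum
        intro i _
        exact Measurable.ite (measurableSet_lt (measurable_pi_apply i) (measurable_pi_apply j))
          measurable_const measurable_const
      exact hg (show MeasurableSet (Set.Iio k) from trivial)
    have hAeq : ∀ j, A j = (fun ω => fun i => E i ω) ⁻¹' (S j) := by
      intro j; rfl
    have hAmeas : ∀ j, MeasurableSet (A j) := fun j => (hAeq j) ▸ hmap (hSmeas j)
    -- exchangeability: all A j have the same probability
    have hAprob : ∀ j, ℙ (A j) = ℙ (A (Fin.last m)) := by
      intro j
      set σ : Equiv.Perm (Fin (m + 1)) := Equiv.swap j (Fin.last m) with hσ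
      have hmap2 : Measurable (fun ω => fun i => E (σ i) ω) :=
        measurable_pi_lambda _ (fun i => hEmeas (σ i))
      have h1 : Measure.map (fun ω => fun i => E (σ i) ω) ℙ (S (Fin.last m)) = ℙ (A j) := by
        rw [Measure.map_apply hmap2 (hSmeas (Fin.last m))]
        congr 1
        ext ω
        simp only [hS, hA, Set.mem_preimage, Set.mem_setOf_eq]
        have hlast : σ (Fin.last m) = j := Equiv.swap_apply_right _ _
        have hcard : ((univ : Finset (Fin (m + 1))).filter
            (fun i => E (σ i) ω < E (σ (Fin.last m)) ω)).card
            = ((univ : Finset (Fin (m + 1))).filter (fun i => E i ω < E j ω)).card := by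
          simp only [hlast]
          exact card_filter_comp_equiv σ (fun i => E i ω < E j ω)
        rw [hcard]
      have h2 : Measure.map (fun ω => fun i => E i ω) ℙ (S (Fin.last m)) = ℙ (A (Fin.last m)) := by
        rw [Measure.map_apply hmap (hSmeas (Fin.last m))]
        rfl
      rw [← h1, hexch σ, h2]
    -- summation bound
    have hsum : (k : ℝ≥0∞) ≤ ∑ j : Fin (m + 1), ℙ (A j) := by
      have hpt : ∀ ω, (k : ℝ≥0∞) ≤ ∑ j : Fin (m + 1), (A j).indicator 1 ω := by
        intro ω
        have hcount := count_good_ge (fun i => E i ω) k hk2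
        calc (k : ℝ≥0∞)
            ≤ (((univ : Finset (Fin (m + 1))).filter
                (fun j => ((univ : Finset (Fin (m + 1))).filter
                  (fun i => E i ω < E j ω)).card < k)).card : ℝ≥0∞) := by
              exact_mod_cast hcount
          _ = ∑ j : Fin (m + 1), if ω ∈ A j then (1 : ℝ≥0∞) else 0 := by
              rw [Finset.sum_boole]
              congr 1
          _ = ∑ j : Fin (m + 1), (A j).indicator 1 ω := by
              refine Finset.sum_congr rfl (fun j _ => ?_)
              simp [Set.indicator_apply]
      calc (k : ℝ≥0∞) = ∫⁻ _, (k : ℝ≥0∞) ∂ℙ := by simp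
        _ ≤ ∫⁻ ω, ∑ j : Fin (m + 1), (A j).indicator 1 ω ∂ℙ := lintegral_mono hpt
        _ = ∑ j : Fin (m + 1), ∫⁻ ω, (A j).indicator 1 ω ∂ℙ :=
            lintegral_finset_sum _ (fun j _ => measurable_const.indicator (hAmeas j))
        _ = ∑ j : Fin (m + 1), ℙ (A j) := by
            exact Finset.sum_congr rfl (fun j _ => lintegral_indicator_one (hAmeas j))
    have hsum2 : (k : ℝ≥0∞) ≤ ((m : ℝ≥0∞) + 1) * ℙ (A (Fin.last m)) := by
      calc (k : ℝ≥0∞) ≤ ∑ j : Fin (m + 1), ℙ (A j) := hsum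
        _ = ∑ _j : Fin (m + 1), ℙ (A (Fin.last m)) := Finset.sum_congr rfl (fun j _ => hAprob j)
        _ = ((m : ℝ≥0∞) + 1) * ℙ (A (Fin.last m)) := by
            rw [Finset.sum_const, card_univ, Fintype.card_fin, nsmul_eq_mul]
            push_cast
            ring
    -- identify the target event with A (last)
    have hset : {ω | (E (Fin.last m) ω : EReal) ≤
        kthSmallest (fun i : Fin m => E i.castSucc ω) k} = A (Fin.last m) := by
      ext ω
      simp only [Set.mem_setOf_eq, hA]
      rw [le_kthSmallest_iff _ _ _ hk1 hcase,
        card_filter_castSucc (fun i => E i ω)]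
    rw [hset] at *
    -- final arithmetic
    have hof : ENNReal.ofReal (1 - α) * ((m : ℝ≥0∞) + 1) ≤ (k : ℝ≥0∞) := by
      have h1 : ((m : ℝ≥0∞) + 1) = ENNReal.ofReal ((m : ℝ) + 1) := by
        rw [ENNReal.ofReal_add (by positivity) zero_le_one]
        simp [ENNReal.ofReal_natCast]
      rw [h1, ← ENNReal.ofReal_mul (by linarith)]
      calc ENNReal.ofReal ((1 - α) * ((m : ℝ) + 1)) ≤ ENNReal.ofReal (k : ℝ) :=
            ENNReal.ofReal_le_ofReal (by rw [hkdef]; exact_mod_cast Nat.le_ceil _)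
        _ = (k : ℝ≥0∞) := ENNReal.ofReal_natCast k
    have hne0 : ((m : ℝ≥0∞) + 1) ≠ 0 := by simp
    have hnetop : ((m : ℝ≥0∞) + 1) ≠ ⊤ := by
      simp [ENNReal.add_ne_top]
    have : ((m : ℝ≥0∞) + 1) * ENNReal.ofReal (1 - α) ≤
        ((m : ℝ≥0∞) + 1) * ℙ (A (Fin.last m)) := by
      calc ((m : ℝ≥0∞) + 1) * ENNReal.ofReal (1 - α)
          = ENNReal.ofReal (1 - α) * ((m : ℝ≥0∞) + 1) := mul_comm _ _
        _ ≤ (k : ℝ≥0∞) := hof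
        _ ≤ _ := hsum2
    exact (ENNReal.mul_le_mul_iff_right hne0 hnetop).mp this
  · -- trivial case: k - 1 ≥ m, so the quantile is +∞
    have hset : {ω | (E (Fin.last m) ω : EReal) ≤
        kthSmallest (fun i : Fin m => E i.castSucc ω) k} = Set.univ := by
      ext ω
      simp [kthSmallest, hcase]
    rw [hset, measure_univ]
    exact ENNReal.ofReal_le_one.mpr (by linarith)
end
end

section
/- Jackknife+ coverage bound (abstract form): let A be an (n+1)×(n+1) matrix of comparisons derived from exchangeable scores, where A is antisymmetric in the sense that A_{ij} = 1 − A_{ji} for i ≠ j with A_{ij} ∈ {0,1}, and the distribution of A is invariant under simultaneous permutation of rows and columns. Then P[∑_{i=1}^n A_{(n+1)i} ≥ (1-α)(n+1)] ≤ 2α. -/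
open MeasureTheory Finset
open scoped ENNReal

noncomputable section


/-- out-degree of vertex `k` -/
def jkDeg {N : ℕ} (B : Fin N → Fin N → Bool) (k : Fin N) : ℕ :=
  (Finset.univ.filter (fun j => B k j = true)).card

lemma jkDeg_perm {N : ℕ} (B : Fin N → Fin N → Bool) (σ : Equiv.Perm (Fin N)) (k : Fin N) :
    jkDeg (fun i j => B (σ i) (σ j)) k = jkDeg B (σ k) := by
  unfold jkDeg
  apply Finset.card_bij (fun j _ => σ j)
  · intro a ha; simp at ha ⊢; exact ha
  · intro a _ b _ h; exact σ.injective h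
  · intro b hb; exact ⟨σ.symm b, by simpa using hb, by simp⟩

lemma jk_key {N : ℕ} (B : Fin N → Fin N → Bool)
    (hirr : ∀ i, B i i = false)
    (hanti : ∀ i j : Fin N, i ≠ j → B i j = !B j i) (S : Finset (Fin N)) :
    2 * ∑ k ∈ S, jkDeg B k + S.card * S.card + S.card ≤ 2 * S.card * N := by
  have hsplit : ∑ k ∈ S, jkDeg B k
      = (∑ k ∈ S, ∑ j ∈ S, if B k j = true then 1 else 0)
        + (∑ k ∈ S, ∑ j ∈ Sᶜ, if B k j = true then 1 else 0) := by
    rw [← Finset.sum_add_distrib]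
    apply Finset.sum_congr rfl
    intro k _
    rw [Finset.sum_add_sum_compl, jkDeg, Finset.card_filter]
  have h2 : ∑ k ∈ S, ∑ j ∈ Sᶜ, (if B k j = true then 1 else 0)
      ≤ S.card * (N - S.card) := by
    calc ∑ k ∈ S, ∑ j ∈ Sᶜ, (if B k j = true then 1 else 0)
        ≤ ∑ k ∈ S, ∑ j ∈ Sᶜ, 1 := by
          apply Finset.sum_le_sum; intro k _; apply Finset.sum_le_sum; intro j _
          split <;> simp
      _ = S.card * (N - S.card) := by
          simp [Finset.card_compl, mul_comm]
  have hpt : ∀ k ∈ S, (∑ j ∈ S, if B k j = true then 1 else 0)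
      + ((∑ j ∈ S, if B j k = true then 1 else 0) + 1) = S.card := by
    intro k hk
    rw [← add_assoc, ← Finset.sum_add_distrib]
    have hptw : ∀ j ∈ S, ((if B k j = true then 1 else 0) + (if B j k = true then 1 else 0))
        = if j = k then 0 else 1 := by
      intro j _
      by_cases h : j = k
      · subst h; simp [hirr j]
      · have := hanti k j (Ne.symm h)
        rcases Bool.eq_false_or_eq_true (B j k) with hb | hb <;>
          simp [h, this, hb]
    rw [Finset.sum_congr rfl hptw]
    have hsum : (∑ j ∈ S, if j = k then 0 else 1) + (∑ j ∈ S, if j = k then 1 else 0)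
        = ∑ j ∈ S, 1 := by
      rw [← Finset.sum_add_distrib]
      apply Finset.sum_congr rfl; intro j _; by_cases h : j = k <;> simp [h]
    have hone : (∑ j ∈ S, if j = k then (1:ℕ) else 0) = 1 := by
      simp [Finset.sum_ite_eq', hk]
    simp only [Finset.sum_const, smul_eq_mul, mul_one] at hsum
    omega
  have hswap : (∑ k ∈ S, ∑ j ∈ S, if B k j = true then 1 else 0)
      = (∑ k ∈ S, ∑ j ∈ S, if B j k = true then 1 else 0) := Finset.sum_comm
  have hsq : (∑ k ∈ S, ∑ j ∈ S, if B k j = true then 1 else 0)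
      + ((∑ k ∈ S, ∑ j ∈ S, if B j k = true then 1 else 0) + S.card)
      = S.card * S.card := by
    have := Finset.sum_congr rfl hpt
    simp only [Finset.sum_add_distrib, Finset.sum_const, smul_eq_mul, mul_one] at this
    omega
  have hN : S.card ≤ N := by simpa using Finset.card_le_card (Finset.subset_univ S)
  have hmul : S.card * (N - S.card) + S.card * S.card = S.card * N := by
    rw [← Nat.mul_add, Nat.sub_add_cancel hN]
  rw [hsplit, mul_assoc]
  omega

lemma jk_card_le {N : ℕ} (hN : 0 < N) (B : Fin N → Fin N → Bool)
    (hirr : ∀ i, B i i = false)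
    (hanti : ∀ i j : Fin N, i ≠ j → B i j = !B j i)
    (α : ℝ) (hα : 0 < α) :
    ((Finset.univ.filter (fun k => (1 - α) * N ≤ (jkDeg B k : ℝ))).card : ℝ)
      ≤ 2 * α * N := by
  set S := Finset.univ.filter (fun k => (1 - α) * N ≤ (jkDeg B k : ℝ)) with hS
  have hkey := jk_key B hirr hanti S
  have hsum : (S.card : ℝ) * ((1 - α) * N) ≤ (∑ k ∈ S, jkDeg B k : ℕ) := by
    push_cast
    rw [mul_comm]
    calc ((1 - α) * N) * S.card = ∑ _k ∈ S, (1 - α) * N := by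
          rw [Finset.sum_const]; ring
      _ ≤ ∑ k ∈ S, (jkDeg B k : ℝ) := by
          apply Finset.sum_le_sum
          intro k hk
          rw [hS] at hk
          exact (Finset.mem_filter.mp hk).2
  have hkeyR : 2 * (∑ k ∈ S, jkDeg B k : ℕ) + (S.card : ℝ) * S.card + S.card
      ≤ 2 * S.card * N := by exact_mod_cast hkey
  rcases Nat.eq_zero_or_pos S.card with h0 | h1
  · rw [h0]; push_cast; positivity
  · have h1' : (1 : ℝ) ≤ S.card := by exact_mod_cast h1
    nlinarith [hsum, hkeyR]

lemma jk_card_castSucc {n : ℕ} (g : Fin (n + 1) → Bool) (hg : g (Fin.last n) = false) :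
    (Finset.univ.filter (fun i : Fin n => g i.castSucc = true)).card
      = (Finset.univ.filter (fun j : Fin (n + 1) => g j = true)).card := by
  apply Finset.card_bij (fun i _ => i.castSucc)
  · intro a ha; simp at ha ⊢; exact ha
  · intro a _ b _ h; exact Fin.castSucc_injective n h
  · intro b hb
    simp only [Finset.mem_filter, Finset.mem_univ, true_and] at hb
    have hbne : b ≠ Fin.last n := by rintro rfl; rw [hg] at hb; exact Bool.false_ne_true hb
    exact ⟨b.castPred hbne, by simpa using hb, Fin.castSucc_castPred b hbne⟩

/-- Jackknife+ coverage bound (abstract form): let `A` be a random tournament on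
`{0, ..., n}` (i.e. `A ω i i = false` and `A ω i j = ¬ A ω j i` for `i ≠ j`) whose
distribution is invariant under simultaneous relabeling of the indices. Then the
probability that index `n` beats at least `(1-α)(n+1)` of the other indices is at
most `2α`. -/
theorem jackknife_plus_bound
    {Ω : Type*} [MeasurableSpace Ω] (ℙ : Measure Ω) [IsProbabilityMeasure ℙ]
    (n : ℕ) (A : Ω → Fin (n + 1) → Fin (n + 1) → Bool)
    (hAmeas : Measurable A)
    (hirrefl : ∀ ω i, A ω i i = false)
    (hanti : ∀ ω, ∀ i j : Fin (n + 1), i ≠ j → A ω i j = !A ω j i)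
    (hexch : ∀ σ : Equiv.Perm (Fin (n + 1)),
      Measure.map (fun ω => fun i j => A ω (σ i) (σ j)) ℙ = Measure.map A ℙ)
    (α : ℝ) (hα : α ∈ Set.Ioo (0 : ℝ) 1) :
    ℙ {ω | (1 - α) * (n + 1) ≤
        ((Finset.univ.filter
          (fun i : Fin n => A ω (Fin.last n) i.castSucc = true)).card : ℝ)} ≤
      ENNReal.ofReal (2 * α) := by
  classical
  obtain ⟨hα0, hα1⟩ := hα
  have hmeasB : ∀ (T : Set (Fin (n + 1) → Fin (n + 1) → Bool)), MeasurableSet T :=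
    fun T => (Set.toFinite T).measurableSet
  set E : Fin (n + 1) → Set Ω :=
    fun k => {ω | (1 - α) * (n + 1) ≤ (jkDeg (A ω) k : ℝ)} with hE
  have hEmeas : ∀ k, MeasurableSet (E k) := by
    intro k
    have h : E k = A ⁻¹' {B | (1 - α) * (n + 1) ≤ (jkDeg B k : ℝ)} := rfl
    rw [h]; exact hAmeas (hmeasB _)
  -- the target event is E (last n)
  have htarget : {ω | (1 - α) * (n + 1) ≤
        ((Finset.univ.filter
          (fun i : Fin n => A ω (Fin.last n) i.castSucc = true)).card : ℝ)}
      = E (Fin.last n) := by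
    ext ω
    simp only [hE, Set.mem_setOf_eq]
    rw [jk_card_castSucc (A ω (Fin.last n)) (hirrefl ω (Fin.last n))]
    rfl
  rw [htarget]
  -- exchangeability: all ℙ (E k) equal
  have hperm : ∀ k, ℙ (E k) = ℙ (E (Fin.last n)) := by
    intro k
    set σ := Equiv.swap (Fin.last n) k with hσ
    have hmeas2 : Measurable (fun ω => fun i j => A ω (σ i) (σ j)) := by
      apply measurable_pi_lambda; intro i; apply measurable_pi_lambda; intro j
      exact (measurable_pi_apply (σ j)).comp ((measurable_pi_apply (σ i)).comp hAmeas)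
    set T : Set (Fin (n + 1) → Fin (n + 1) → Bool) :=
      {B | (1 - α) * (n + 1) ≤ (jkDeg B (Fin.last n) : ℝ)} with hT
    have h1 : Measure.map (fun ω => fun i j => A ω (σ i) (σ j)) ℙ T
        = Measure.map A ℙ T := by rw [hexch σ]
    rw [Measure.map_apply hmeas2 (hmeasB T), Measure.map_apply hAmeas (hmeasB T)] at h1
    have hL : (fun ω => fun i j => A ω (σ i) (σ j)) ⁻¹' T = E k := by
      ext ω
      simp only [Set.mem_preimage, hT, hE, Set.mem_setOf_eq]
      rw [jkDeg_perm (A ω) σ (Fin.last n), hσ, Equiv.swap_apply_left]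
    have hR : A ⁻¹' T = E (Fin.last n) := rfl
    rw [hL, hR] at h1
    exact h1
  -- sum of indicators is the card of "winners", bounded deterministically
  have hsum : ∑ k : Fin (n + 1), ℙ (E k) ≤ ENNReal.ofReal (2 * α * (n + 1)) := by
    calc ∑ k : Fin (n + 1), ℙ (E k)
        = ∑ k : Fin (n + 1), ∫⁻ ω, (E k).indicator 1 ω ∂ℙ := by
          exact Finset.sum_congr rfl fun k _ => (lintegral_indicator_one (hEmeas k)).symm
      _ = ∫⁻ ω, ∑ k : Fin (n + 1), (E k).indicator 1 ω ∂ℙ := by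
          rw [lintegral_finset_sum]
          intro k _
          exact (measurable_const.indicator (hEmeas k))
      _ ≤ ∫⁻ _, ENNReal.ofReal (2 * α * (n + 1)) ∂ℙ := by
          apply lintegral_mono
          intro ω
          dsimp only
          have hcard : (∑ k : Fin (n + 1), (E k).indicator 1 ω)
              = ((Finset.univ.filter
                  (fun k : Fin (n + 1) => (1 - α) * (n + 1) ≤ (jkDeg (A ω) k : ℝ))).card
                 : ℝ≥0∞) := by
            rw [Finset.card_filter]
            push_cast
            refine Finset.sum_congr rfl fun k _ => ?_
            rw [Set.indicator_apply]
            simp only [hE, Set.mem_setOf_eq]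
            split <;> simp_all
          rw [hcard]
          have hle := jk_card_le (Nat.succ_pos n) (A ω) (hirrefl ω) (hanti ω) α hα0
          calc ((Finset.univ.filter
                  (fun k : Fin (n + 1) => (1 - α) * (n + 1) ≤ (jkDeg (A ω) k : ℝ))).card
                 : ℝ≥0∞)
              = ENNReal.ofReal ((Finset.univ.filter
                  (fun k : Fin (n + 1) => (1 - α) * (n + 1) ≤ (jkDeg (A ω) k : ℝ))).card) := by
                rw [ENNReal.ofReal_natCast]
            _ ≤ ENNReal.ofReal (2 * α * (n + 1)) := by
                apply ENNReal.ofReal_le_ofReal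
                convert hle using 3 <;> push_cast <;> ring
      _ = ENNReal.ofReal (2 * α * (n + 1)) := by
          rw [lintegral_const, measure_univ, mul_one]
  have hsum2 : ∑ k : Fin (n + 1), ℙ (E k) = (n + 1 : ℝ≥0∞) * ℙ (E (Fin.last n)) := by
    rw [Finset.sum_congr rfl fun k _ => hperm k, Finset.sum_const]
    simp [mul_comm]
  rw [hsum2] at hsum
  have hofReal : ENNReal.ofReal (2 * α * (n + 1))
      = (n + 1 : ℝ≥0∞) * ENNReal.ofReal (2 * α) := by
    rw [mul_comm, ENNReal.ofReal_mul (by positivity)]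
    congr 1
    rw [show ((n : ℝ) + 1) = ((n + 1 : ℕ) : ℝ) by push_cast; ring, ENNReal.ofReal_natCast]
    push_cast; ring
  rw [hofReal] at hsum
  have hne : (n + 1 : ℝ≥0∞) ≠ 0 := by
    intro h
    rw [add_eq_zero] at h
    exact one_ne_zero h.2
  have hnt : (n + 1 : ℝ≥0∞) ≠ ⊤ := by
    simp [ENNReal.add_ne_top]
  exact (ENNReal.mul_le_mul_iff_right hne hnt).mp hsum

end
end
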